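/- Let G be a compact topological group acting continuously on a topological space V, let σ : V → ℝⁿ be continuous, constant on orbits, and separating orbits. Suppose c : ℝ → σ(V) is continuous and for every t ∈ ℝ and every v ∈ σ⁻¹(c(t)) there exists a local continuous lift of c near t through v. If local lifts can be glued using the group action, then any maximal local continuous lift of c defined on an open interval (a,b) strictly contained in an interval where local lifts exist can be extended to a larger interval. Conclude: c admits a continuous lift on any open interval on which local continuous lifts exist through every point of every fiber. -/

import Mathlib

open Metric Set

private lemma lift_union {V : Type*} [TopologicalSpace V] {f : ℝ → V} {s t : Set ℝ}
    (hs : IsClosed s) (ht : IsClosed t) (h1 : ContinuousOn f s) (h2 : ContinuousOn f t) :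
    ContinuousOn f (s ∪ t) := by
  intro x hx
  have hsx : ContinuousWithinAt f s x := by
    by_cases h : x ∈ s
    · exact h1 x h
    · exact continuousWithinAt_of_notMem_closure (by rwa [hs.closure_eq])
  have htx : ContinuousWithinAt f t x := by
    by_cases h : x ∈ t
    · exact h2 x h
    · exact continuousWithinAt_of_notMem_closure (by rwa [ht.closure_eq])
  exact hsx.union htx

section helpers

variable {G : Type*} [Group G] [TopologicalSpace G] [IsTopologicalGroup G] [CompactSpace G]
variable {V : Type*} [TopologicalSpace V] [MulAction G V] [ContinuousSMul G V]
variable {n : ℕ} {σ : V → (Fin n → ℝ)} {c : ℝ → (Fin n → ℝ)} {I : Set ℝ}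

private lemma lift_extend_right
    (hsep : ∀ v w, σ v = σ w ↔ ∃ g : G, g • v = w)
    (hcim : ∀ t, c t ∈ Set.range σ)
    (hIconn : I.OrdConnected)
    (hloc : ∀ t ∈ I, ∀ v : V, σ v = c t →
      ∃ ε > (0 : ℝ), ∃ cl : ℝ → V, cl t = v ∧
        ContinuousOn cl (ball t ε ∩ I) ∧ ∀ s ∈ ball t ε ∩ I, σ (cl s) = c s)
    {a b : ℝ} (ha : a ∈ I) (hb : b ∈ I) (hab : a ≤ b) {v : V} (hv : σ v = c a) :
    ∃ f : ℝ → V, f a = v ∧ ContinuousOn f (Icc a b) ∧ ∀ s ∈ Icc a b, σ (f s) = c s := by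
  classical
  set S : Set ℝ :=
    {x | x ∈ Icc a b ∧ ∃ f : ℝ → V, f a = v ∧ ContinuousOn f (Icc a x) ∧
      ∀ s ∈ Icc a x, σ (f s) = c s} with hSdef
  have haS : a ∈ S := by
    refine ⟨⟨le_refl a, hab⟩, fun _ => v, rfl, continuousOn_const, ?_⟩
    intro s hs
    have : s = a := le_antisymm hs.2 hs.1
    rw [this, hv]
  have hSne : S.Nonempty := ⟨a, haS⟩
  have hSbdd : BddAbove S := ⟨b, fun x hx => hx.1.2⟩
  set m := sSup S with hm
  have ham : a ≤ m := le_csSup hSbdd haS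
  have hmb : m ≤ b := csSup_le hSne fun x hx => hx.1.2
  have hmI : m ∈ I := hIconn.out ha hb ⟨ham, hmb⟩
  have hmS : m ∈ S := by
    obtain ⟨v', hv'⟩ := hcim m
    obtain ⟨ε, hε, cl₂, hcl₂m, hcl₂cont, hcl₂σ⟩ := hloc m hmI v' hv'
    obtain ⟨x, hxS, hx⟩ := exists_lt_of_lt_csSup hSne (by linarith : m - ε < m)
    have hxm : x ≤ m := le_csSup hSbdd hxS
    obtain ⟨hxab, f1, hf1a, hf1c, hf1σ⟩ := hxS
    have hIxm : Icc x m ⊆ ball m ε ∩ I := by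
      intro s hs
      refine ⟨?_, hIconn.out ha hb ⟨le_trans hxab.1 hs.1, le_trans hs.2 hmb⟩⟩
      rw [mem_ball, Real.dist_eq, abs_sub_lt_iff]
      exact ⟨by linarith [hs.2], by linarith [hs.1]⟩
    have hx_mem : x ∈ ball m ε ∩ I := hIxm ⟨le_refl x, hxm⟩
    have hσx : σ (cl₂ x) = σ (f1 x) := by
      rw [hcl₂σ x hx_mem, hf1σ x ⟨hxab.1, le_refl x⟩]
    obtain ⟨g, hg⟩ := (hsep _ _).1 hσx
    set f : ℝ → V := fun s => if s ≤ x then f1 s else g • cl₂ s with hfdef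
    have heq1 : EqOn f f1 (Icc a x) := fun s hs => if_pos hs.2
    have heq2 : EqOn f (fun s => g • cl₂ s) (Icc x m) := by
      intro s hs
      by_cases h : s ≤ x
      · have hsx : s = x := le_antisymm h hs.1
        subst hsx
        simp only [hfdef, if_pos le_rfl, hg]
      · simp only [hfdef, if_neg h]
    have hc2 : ContinuousOn (fun s => g • cl₂ s) (Icc x m) :=
      ((hcl₂cont.mono hIxm).const_smul g)
    refine ⟨⟨ham, hmb⟩, f, ?_, ?_, ?_⟩
    · have : a ≤ x := hxab.1
      simp [hfdef, this, hf1a]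
    · have : ContinuousOn f (Icc a x ∪ Icc x m) :=
        lift_union isClosed_Icc isClosed_Icc (hf1c.congr heq1) (hc2.congr heq2)
      rwa [Set.Icc_union_Icc_eq_Icc hxab.1 hxm] at this
    · intro s hs
      by_cases h : s ≤ x
      · rw [heq1 ⟨hs.1, h⟩]; exact hf1σ s ⟨hs.1, h⟩
      · push_neg at h
        rw [heq2 ⟨le_of_lt h, hs.2⟩]
        have : σ (cl₂ s) = σ (g • cl₂ s) := (hsep _ _).2 ⟨g, rfl⟩
        rw [← this]
        exact hcl₂σ s (hIxm ⟨le_of_lt h, hs.2⟩)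
  have hmbeq : m = b := by
    by_contra hne
    have hmblt : m < b := lt_of_le_of_ne hmb hne
    obtain ⟨_, f, hfa, hfc, hfσ⟩ := hmS
    obtain ⟨ε, hε, cl₂, hcl₂m, hcl₂cont, hcl₂σ⟩ :=
      hloc m hmI (f m) (hfσ m ⟨ham, le_refl m⟩)
    set y := min b (m + ε / 2) with hy
    have hmy : m < y := lt_min hmblt (by linarith)
    have hyb : y ≤ b := min_le_left _ _
    have hIym : Icc m y ⊆ ball m ε ∩ I := by
      intro s hs
      have hsy : s ≤ m + ε / 2 := le_trans hs.2 (min_le_right _ _)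
      refine ⟨?_, hIconn.out ha hb ⟨le_trans ham hs.1, le_trans hs.2 hyb⟩⟩
      rw [mem_ball, Real.dist_eq, abs_sub_lt_iff]
      exact ⟨by linarith, by linarith [hs.1]⟩
    set f2 : ℝ → V := fun s => if s ≤ m then f s else cl₂ s with hf2def
    have heq1 : EqOn f2 f (Icc a m) := fun s hs => if_pos hs.2
    have heq2 : EqOn f2 cl₂ (Icc m y) := by
      intro s hs
      by_cases h : s ≤ m
      · have hsm : s = m := le_antisymm h hs.1
        subst hsm
        simp only [hf2def, if_pos le_rfl, hcl₂m]
      · simp only [hf2def, if_neg h]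
    have hyS : y ∈ S := by
      refine ⟨⟨le_trans ham (le_of_lt hmy), hyb⟩, f2, ?_, ?_, ?_⟩
      · simp [hf2def, ham, hfa]
      · have : ContinuousOn f2 (Icc a m ∪ Icc m y) :=
          lift_union isClosed_Icc isClosed_Icc (hfc.congr heq1)
            ((hcl₂cont.mono hIym).congr heq2)
        rwa [Set.Icc_union_Icc_eq_Icc ham (le_of_lt hmy)] at this
      · intro s hs
        by_cases h : s ≤ m
        · rw [heq1 ⟨hs.1, h⟩]; exact hfσ s ⟨hs.1, h⟩
        · push_neg at h
          rw [heq2 ⟨le_of_lt h, hs.2⟩]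
          exact hcl₂σ s (hIym ⟨le_of_lt h, hs.2⟩)
    exact absurd (le_csSup hSbdd hyS) (not_le.mpr hmy)
  obtain ⟨_, f, hfa, hfc, hfσ⟩ := hmS
  rw [hmbeq] at hfc hfσ
  exact ⟨f, hfa, hfc, hfσ⟩

private lemma lift_extend_left
    (hsep : ∀ v w, σ v = σ w ↔ ∃ g : G, g • v = w)
    (hcim : ∀ t, c t ∈ Set.range σ)
    (hIconn : I.OrdConnected)
    (hloc : ∀ t ∈ I, ∀ v : V, σ v = c t →
      ∃ ε > (0 : ℝ), ∃ cl : ℝ → V, cl t = v ∧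
        ContinuousOn cl (ball t ε ∩ I) ∧ ∀ s ∈ ball t ε ∩ I, σ (cl s) = c s)
    {a b : ℝ} (ha : a ∈ I) (hb : b ∈ I) (hab : a ≤ b) {v : V} (hv : σ v = c b) :
    ∃ f : ℝ → V, f b = v ∧ ContinuousOn f (Icc a b) ∧ ∀ s ∈ Icc a b, σ (f s) = c s := by
  classical
  set S : Set ℝ :=
    {x | x ∈ Icc a b ∧ ∃ f : ℝ → V, f b = v ∧ ContinuousOn f (Icc x b) ∧
      ∀ s ∈ Icc x b, σ (f s) = c s} with hSdef
  have hbS : b ∈ S := by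
    refine ⟨⟨hab, le_refl b⟩, fun _ => v, rfl, continuousOn_const, ?_⟩
    intro s hs
    have : s = b := le_antisymm hs.2 hs.1
    rw [this, hv]
  have hSne : S.Nonempty := ⟨b, hbS⟩
  have hSbdd : BddBelow S := ⟨a, fun x hx => hx.1.1⟩
  set m := sInf S with hm
  have hmb : m ≤ b := csInf_le hSbdd hbS
  have ham : a ≤ m := le_csInf hSne fun x hx => hx.1.1
  have hmI : m ∈ I := hIconn.out ha hb ⟨ham, hmb⟩
  have hmS : m ∈ S := by
    obtain ⟨v', hv'⟩ := hcim m
    obtain ⟨ε, hε, cl₂, hcl₂m, hcl₂cont, hcl₂σ⟩ := hloc m hmI v' hv'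
    obtain ⟨x, hxS, hx⟩ := exists_lt_of_csInf_lt hSne (by linarith : m < m + ε)
    have hxm : m ≤ x := csInf_le hSbdd hxS
    obtain ⟨hxab, f1, hf1b, hf1c, hf1σ⟩ := hxS
    have hIxm : Icc m x ⊆ ball m ε ∩ I := by
      intro s hs
      refine ⟨?_, hIconn.out ha hb ⟨le_trans ham hs.1, le_trans hs.2 hxab.2⟩⟩
      rw [mem_ball, Real.dist_eq, abs_sub_lt_iff]
      exact ⟨by linarith [hs.2], by linarith [hs.1]⟩
    have hx_mem : x ∈ ball m ε ∩ I := hIxm ⟨hxm, le_refl x⟩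
    have hσx : σ (cl₂ x) = σ (f1 x) := by
      rw [hcl₂σ x hx_mem, hf1σ x ⟨le_refl x, hxab.2⟩]
    obtain ⟨g, hg⟩ := (hsep _ _).1 hσx
    set f : ℝ → V := fun s => if x ≤ s then f1 s else g • cl₂ s with hfdef
    have heq1 : EqOn f f1 (Icc x b) := fun s hs => if_pos hs.1
    have heq2 : EqOn f (fun s => g • cl₂ s) (Icc m x) := by
      intro s hs
      by_cases h : x ≤ s
      · have hsx : s = x := le_antisymm hs.2 h
        subst hsx
        simp only [hfdef, if_pos le_rfl, hg]
      · simp only [hfdef, if_neg h]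
    have hc2 : ContinuousOn (fun s => g • cl₂ s) (Icc m x) :=
      ((hcl₂cont.mono hIxm).const_smul g)
    refine ⟨⟨ham, hmb⟩, f, ?_, ?_, ?_⟩
    · have : x ≤ b := hxab.2
      simp [hfdef, this, hf1b]
    · have : ContinuousOn f (Icc m x ∪ Icc x b) :=
        lift_union isClosed_Icc isClosed_Icc (hc2.congr heq2) (hf1c.congr heq1)
      rwa [Set.Icc_union_Icc_eq_Icc hxm hxab.2] at this
    · intro s hs
      by_cases h : x ≤ s
      · rw [heq1 ⟨h, hs.2⟩]; exact hf1σ s ⟨h, hs.2⟩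
      · push_neg at h
        rw [heq2 ⟨hs.1, le_of_lt h⟩]
        have : σ (cl₂ s) = σ (g • cl₂ s) := (hsep _ _).2 ⟨g, rfl⟩
        rw [← this]
        exact hcl₂σ s (hIxm ⟨hs.1, le_of_lt h⟩)
  have hmaeq : m = a := by
    by_contra hne
    have hmalt : a < m := lt_of_le_of_ne ham (Ne.symm hne)
    obtain ⟨_, f, hfb, hfc, hfσ⟩ := hmS
    obtain ⟨ε, hε, cl₂, hcl₂m, hcl₂cont, hcl₂σ⟩ :=
      hloc m hmI (f m) (hfσ m ⟨le_refl m, hmb⟩)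
    set y := max a (m - ε / 2) with hy
    have hmy : y < m := max_lt hmalt (by linarith)
    have hya : a ≤ y := le_max_left _ _
    have hIym : Icc y m ⊆ ball m ε ∩ I := by
      intro s hs
      have hsy : m - ε / 2 ≤ s := le_trans (le_max_right _ _) hs.1
      refine ⟨?_, hIconn.out ha hb ⟨le_trans hya hs.1, le_trans hs.2 hmb⟩⟩
      rw [mem_ball, Real.dist_eq, abs_sub_lt_iff]
      exact ⟨by linarith [hs.2], by linarith⟩
    set f2 : ℝ → V := fun s => if m ≤ s then f s else cl₂ s with hf2def
    have heq1 : EqOn f2 f (Icc m b) := fun s hs => if_pos hs.1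
    have heq2 : EqOn f2 cl₂ (Icc y m) := by
      intro s hs
      by_cases h : m ≤ s
      · have hsm : s = m := le_antisymm hs.2 h
        subst hsm
        simp only [hf2def, if_pos le_rfl, hcl₂m]
      · simp only [hf2def, if_neg h]
    have hyS : y ∈ S := by
      refine ⟨⟨hya, le_trans (le_of_lt hmy) hmb⟩, f2, ?_, ?_, ?_⟩
      · simp [hf2def, hmb, hfb]
      · have : ContinuousOn f2 (Icc y m ∪ Icc m b) :=
          lift_union isClosed_Icc isClosed_Icc ((hcl₂cont.mono hIym).congr heq2)
            (hfc.congr heq1)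
        rwa [Set.Icc_union_Icc_eq_Icc (le_of_lt hmy) hmb] at this
      · intro s hs
        by_cases h : m ≤ s
        · rw [heq1 ⟨h, hs.2⟩]; exact hfσ s ⟨h, hs.2⟩
        · push_neg at h
          rw [heq2 ⟨hs.1, le_of_lt h⟩]
          exact hcl₂σ s (hIym ⟨hs.1, le_of_lt h⟩)
    exact absurd (csInf_le hSbdd hyS) (not_le.mpr hmy)
  obtain ⟨_, f, hfb, hfc, hfσ⟩ := hmS
  rw [hmaeq] at hfc hfσ
  exact ⟨f, hfb, hfc, hfσ⟩

private lemma lift_extend_both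
    (hsep : ∀ v w, σ v = σ w ↔ ∃ g : G, g • v = w)
    (hcim : ∀ t, c t ∈ Set.range σ)
    (hIconn : I.OrdConnected)
    (hloc : ∀ t ∈ I, ∀ v : V, σ v = c t →
      ∃ ε > (0 : ℝ), ∃ cl : ℝ → V, cl t = v ∧
        ContinuousOn cl (ball t ε ∩ I) ∧ ∀ s ∈ ball t ε ∩ I, σ (cl s) = c s)
    {p q p' q' : ℝ} (hp : p ∈ I) (hq : q ∈ I) (hp' : p' ∈ I) (hq' : q' ∈ I)
    (hpq : p ≤ q) (hp'p : p' ≤ p) (hqq' : q ≤ q')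
    {f : ℝ → V} (hfc : ContinuousOn f (Icc p q)) (hfσ : ∀ s ∈ Icc p q, σ (f s) = c s) :
    ∃ F : ℝ → V, ContinuousOn F (Icc p' q') ∧ (∀ s ∈ Icc p' q', σ (F s) = c s) ∧
      EqOn F f (Icc p q) := by
  classical
  obtain ⟨gr, hgrq, hgrc, hgrσ⟩ :=
    lift_extend_right hsep hcim hIconn hloc hq hq' hqq' (hfσ q ⟨hpq, le_refl q⟩)
  obtain ⟨gl, hglp, hglc, hglσ⟩ :=
    lift_extend_left hsep hcim hIconn hloc hp' hp hp'p (hfσ p ⟨le_refl p, hpq⟩)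
  set F : ℝ → V := fun s => if s < p then gl s else if s ≤ q then f s else gr s with hFdef
  have heqf : EqOn F f (Icc p q) := by
    intro s hs
    simp only [hFdef, if_neg (not_lt.mpr hs.1), if_pos hs.2]
  have heql : EqOn F gl (Icc p' p) := by
    intro s hs
    by_cases h : s < p
    · simp only [hFdef, if_pos h]
    · have hsp : s = p := le_antisymm hs.2 (not_lt.mp h)
      subst hsp
      simp only [hFdef, if_neg (lt_irrefl s), if_pos hpq, hglp]
  have heqr : EqOn F gr (Icc q q') := by
    intro s hs
    by_cases h : s ≤ q
    · have hsq : s = q := le_antisymm h hs.1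
      subst hsq
      simp only [hFdef, if_neg (not_lt.mpr hpq), if_pos le_rfl, hgrq]
    · have : ¬ s < p := not_lt.mpr (le_trans hpq (le_of_lt (not_le.mp h)))
      simp only [hFdef, if_neg this, if_neg h]
  have hcont : ContinuousOn F (Icc p' q') := by
    have h1 : ContinuousOn F (Icc p' p ∪ Icc p q) :=
      lift_union isClosed_Icc isClosed_Icc (hglc.congr heql) (hfc.congr heqf)
    rw [Set.Icc_union_Icc_eq_Icc hp'p hpq] at h1
    have h2 : ContinuousOn F (Icc p' q ∪ Icc q q') :=
      lift_union isClosed_Icc isClosed_Icc h1 (hgrc.congr heqr)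
    rwa [Set.Icc_union_Icc_eq_Icc (le_trans hp'p hpq) hqq'] at h2
  refine ⟨F, hcont, ?_, heqf⟩
  intro s hs
  by_cases h1 : s < p
  · rw [heql ⟨hs.1, le_of_lt h1⟩]; exact hglσ s ⟨hs.1, le_of_lt h1⟩
  · push_neg at h1
    by_cases h2 : s ≤ q
    · rw [heqf ⟨h1, h2⟩]; exact hfσ s ⟨h1, h2⟩
    · push_neg at h2
      rw [heqr ⟨le_of_lt h2, hs.2⟩]; exact hgrσ s ⟨le_of_lt h2, hs.2⟩

end helpers

/-- Let a compact group `G` act continuously on `V` and let `σ : V → ℝⁿ` be continuous,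
constant on orbits and separating orbits. If `c` is a continuous curve into `σ(V)` and
local continuous lifts of `c` exist near every point of an open interval `I` through every
point of the corresponding fiber, then `c` admits a continuous lift on all of `I`. -/
theorem continuous_lift_on_interval
    (G : Type*) [Group G] [TopologicalSpace G] [IsTopologicalGroup G] [CompactSpace G]
    (V : Type*) [TopologicalSpace V] [MulAction G V] [ContinuousSMul G V]
    (n : ℕ) (σ : V → (Fin n → ℝ)) (hσcont : Continuous σ)
    (hsep : ∀ v w, σ v = σ w ↔ ∃ g : G, g • v = w)
    (c : ℝ → (Fin n → ℝ)) (hc : Continuous c)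
    (hcim : ∀ t, c t ∈ Set.range σ)
    (I : Set ℝ) (hIopen : IsOpen I) (hIconn : I.OrdConnected)
    (hloc : ∀ t ∈ I, ∀ v : V, σ v = c t →
      ∃ ε > (0 : ℝ), ∃ cl : ℝ → V, cl t = v ∧
        ContinuousOn cl (ball t ε ∩ I) ∧ ∀ s ∈ ball t ε ∩ I, σ (cl s) = c s) :
    ∃ cbar : ℝ → V, ContinuousOn cbar I ∧ ∀ t ∈ I, σ (cbar t) = c t := by
  classical
  obtain ⟨v₁, -⟩ := hcim 0
  rcases Set.eq_empty_or_nonempty I with hIe | ⟨t₀, ht₀⟩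
  · exact ⟨fun _ => v₁, by rw [hIe]; exact continuousOn_empty _, by simp [hIe]⟩
  obtain ⟨v₀, hv₀⟩ := hcim t₀
  -- enumeration of the rationals
  set e : ℕ → ℚ := fun k => (Denumerable.eqv ℚ).symm k with he
  have hesurj : ∀ q : ℚ, e ((Denumerable.eqv ℚ) q) = q := fun q =>
    Equiv.symm_apply_apply _ q
  -- the nested exhaustion by closed intervals
  set A : ℕ → ℝ × ℝ := fun k =>
    Nat.rec (t₀, t₀)
      (fun k p => if ((e k : ℝ)) ∈ I then (min p.1 (e k), max p.2 (e k)) else p) k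
    with hA
  have hAstep : ∀ k, A (k + 1) =
      if ((e k : ℝ)) ∈ I then (min (A k).1 (e k), max (A k).2 (e k)) else A k :=
    fun k => rfl
  have hA0 : A 0 = (t₀, t₀) := rfl
  have hinv : ∀ k, (A k).1 ∈ I ∧ (A k).2 ∈ I ∧ (A k).1 ≤ t₀ ∧ t₀ ≤ (A k).2 := by
    intro k
    induction k with
    | zero => exact ⟨ht₀, ht₀, le_refl _, le_refl _⟩
    | succ k ih =>
      rw [hAstep k]
      by_cases h : ((e k : ℝ)) ∈ I
      · rw [if_pos h]
        refine ⟨?_, ?_, le_trans (min_le_left _ _) ih.2.2.1, le_trans ih.2.2.2 (le_max_left _ _)⟩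
        · rcases min_cases (A k).1 ((e k : ℝ)) with ⟨hm, _⟩ | ⟨hm, _⟩ <;> rw [hm]
          exacts [ih.1, h]
        · rcases max_cases (A k).2 ((e k : ℝ)) with ⟨hm, _⟩ | ⟨hm, _⟩ <;> rw [hm]
          exacts [ih.2.1, h]
      · rw [if_neg h]; exact ih
  have hstep1 : ∀ k, (A (k + 1)).1 ≤ (A k).1 := by
    intro k
    rw [hAstep k]
    by_cases h : ((e k : ℝ)) ∈ I
    · rw [if_pos h]; exact min_le_left _ _
    · rw [if_neg h]
  have hstep2 : ∀ k, (A k).2 ≤ (A (k + 1)).2 := by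
    intro k
    rw [hAstep k]
    by_cases h : ((e k : ℝ)) ∈ I
    · rw [if_pos h]; exact le_max_left _ _
    · rw [if_neg h]
  have hanti : ∀ j k, j ≤ k → (A k).1 ≤ (A j).1 := by
    intro j k hjk
    induction k, hjk using Nat.le_induction with
    | base => exact le_refl _
    | succ k hjk ih => exact le_trans (hstep1 k) ih
  have hmono : ∀ j k, j ≤ k → (A j).2 ≤ (A k).2 := by
    intro j k hjk
    induction k, hjk using Nat.le_induction with
    | base => exact le_refl _
    | succ k hjk ih => exact le_trans ih (hstep2 k)
  have hsub : ∀ j k, j ≤ k → Icc (A j).1 (A j).2 ⊆ Icc (A k).1 (A k).2 :=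
    fun j k hjk => Set.Icc_subset_Icc (hanti j k hjk) (hmono j k hjk)
  -- coverage
  have hcover : ∀ t ∈ I, ∃ k, (A k).1 < t ∧ t < (A k).2 := by
    intro t ht
    obtain ⟨ε, hε, hball⟩ := Metric.isOpen_iff.1 hIopen t ht
    obtain ⟨q, hq1, hq2⟩ := exists_rat_btwn (by linarith : t - ε < t)
    obtain ⟨r, hr1, hr2⟩ := exists_rat_btwn (by linarith : t < t + ε)
    have hqI : ((q : ℝ)) ∈ I := by
      apply hball
      rw [mem_ball, Real.dist_eq, abs_sub_lt_iff]
      constructor <;> linarith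
    have hrI : ((r : ℝ)) ∈ I := by
      apply hball
      rw [mem_ball, Real.dist_eq, abs_sub_lt_iff]
      constructor <;> linarith
    set kq := (Denumerable.eqv ℚ) q with hkq
    set kr := (Denumerable.eqv ℚ) r with hkr
    have h1 : (A (kq + 1)).1 ≤ q := by
      rw [hAstep kq, hesurj q, if_pos hqI]
      exact min_le_right _ _
    have h2 : ((r : ℝ)) ≤ (A (kr + 1)).2 := by
      rw [hAstep kr, hesurj r, if_pos hrI]
      exact le_max_right _ _
    refine ⟨max (kq + 1) (kr + 1), ?_, ?_⟩
    · exact lt_of_le_of_lt (le_trans (hanti (kq + 1) (max (kq + 1) (kr + 1)) (le_max_left _ _)) h1) hq2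
    · exact lt_of_lt_of_le hr1 (le_trans h2 (hmono (kr + 1) (max (kq + 1) (kr + 1)) (le_max_right _ _)))
  -- extension step
  have key : ∀ k (f : ℝ → V),
      (ContinuousOn f (Icc (A k).1 (A k).2) ∧ ∀ s ∈ Icc (A k).1 (A k).2, σ (f s) = c s) →
      ∃ F : ℝ → V,
        ((ContinuousOn F (Icc (A (k+1)).1 (A (k+1)).2) ∧
          ∀ s ∈ Icc (A (k+1)).1 (A (k+1)).2, σ (F s) = c s) ∧
         EqOn F f (Icc (A k).1 (A k).2)) := by
    intro k f hf
    obtain ⟨F, h1, h2, h3⟩ := lift_extend_both hsep hcim hIconn hloc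
      (hinv k).1 (hinv k).2.1 (hinv (k+1)).1 (hinv (k+1)).2.1
      (le_trans (hinv k).2.2.1 (hinv k).2.2.2) (hstep1 k) (hstep2 k) hf.1 hf.2
    exact ⟨F, ⟨h1, h2⟩, h3⟩
  choose Fmap hFmap using key
  -- the sequence of lifts
  set seq : ∀ k : ℕ, {f : ℝ → V //
      ContinuousOn f (Icc (A k).1 (A k).2) ∧ ∀ s ∈ Icc (A k).1 (A k).2, σ (f s) = c s} :=
    fun k => Nat.rec
      ⟨fun _ => v₀, by
        constructor
        · exact continuousOn_const
        · intro s hs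
          have h1 : s ≤ t₀ := hs.2
          have h2 : t₀ ≤ s := hs.1
          have : s = t₀ := le_antisymm h1 h2
          rw [this, hv₀]⟩
      (fun k p => ⟨Fmap k p.1 p.2, (hFmap k p.1 p.2).1⟩) k
    with hseq
  have hcompat1 : ∀ k, EqOn ((seq (k+1)).1) ((seq k).1) (Icc (A k).1 (A k).2) :=
    fun k => (hFmap k (seq k).1 (seq k).2).2
  have hcompat : ∀ j k, j ≤ k → EqOn ((seq k).1) ((seq j).1) (Icc (A j).1 (A j).2) := by
    intro j k hjk
    induction k, hjk using Nat.le_induction with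
    | base => exact fun t _ => rfl
    | succ k hjk ih =>
      intro t ht
      rw [hcompat1 k (hsub j k hjk ht)]
      exact ih ht
  -- the global lift
  set cbar : ℝ → V := fun t =>
    if h : ∃ k, t ∈ Icc (A k).1 (A k).2 then (seq (Nat.find h)).1 t else v₀ with hcbar
  have hcbar_eq : ∀ k, ∀ t ∈ Icc (A k).1 (A k).2, cbar t = (seq k).1 t := by
    intro k t ht
    have h : ∃ k, t ∈ Icc (A k).1 (A k).2 := ⟨k, ht⟩
    rw [hcbar]
    simp only [dif_pos h]
    exact (hcompat (Nat.find h) k (Nat.find_min' h ht) (Nat.find_spec h)).symm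
  refine ⟨cbar, ?_, ?_⟩
  · intro t ht
    obtain ⟨k, hk1, hk2⟩ := hcover t ht
    have hnb : Icc (A k).1 (A k).2 ∈ nhds t :=
      Filter.mem_of_superset (Ioo_mem_nhds hk1 hk2) Set.Ioo_subset_Icc_self
    have hca : ContinuousAt ((seq k).1) t := (seq k).2.1.continuousAt hnb
    have hev : cbar =ᶠ[nhds t] ((seq k).1) :=
      Filter.eventuallyEq_of_mem hnb (fun s hs => hcbar_eq k s hs)
    exact (hca.congr hev.symm).continuousWithinAt
  · intro t ht
    obtain ⟨k, hk1, hk2⟩ := hcover t ht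
    have ht' : t ∈ Icc (A k).1 (A k).2 := ⟨le_of_lt hk1, le_of_lt hk2⟩
    rw [hcbar_eq k t ht']
    exact (seq k).2.2 t ht'
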